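/- Let F = F(A) be the free group on A = {a_1,…,a_k} with k ≥ 2, let m ≥ 1, let K ≥ 1 be an integer and let 0 < λ < 1. The set of m-tuples (u_1,…,u_m) ∈ C_{m,A} such that every subword of any u_i of length ≥ λ|u_i| contains every freely reduced word of length ≤ K in F(A) as a subword, is exponentially generic in C_{m,A}. -/

import Mathlib

/-!
STATEMENT 12: for k ≥ 2, m ≥ 1, K ≥ 1, 0 < λ < 1, the set of m-tuples in
C_{m,A} such that every subword of any entry u_i of length ≥ λ|u_i|
contains every freely reduced word of length ≤ K as a subword is
exponentially generic in C_{m,A}.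
-/

/-- The length of the freely reduced word representing `g`. -/
def wlen {α : Type} [DecidableEq α] (g : FreeGroup α) : ℕ := g.toWord.length

/-- `g` is cyclically reduced: in its reduced word the first letter is not
the inverse of the last letter. -/
def CyclicallyReduced {α : Type} [DecidableEq α] (g : FreeGroup α) : Prop :=
  ∀ x y : α × Bool, g.toWord.head? = some x → g.toWord.getLast? = some y →
    x ≠ (y.1, !y.2)

/-- `C_{m,A}`: the set of `m`-tuples of cyclically reduced words in the free
group of rank `k`, all entries of equal length. -/
def Cset (k m : ℕ) : Set (Fin m → FreeGroup (Fin k)) :=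
  {T | (∀ i, CyclicallyReduced (T i)) ∧ ∀ i j, wlen (T i) = wlen (T j)}

/-- `γ_A(n,U)`: the number of tuples in `U` all of whose entries have length `n`. -/
noncomputable def gammaA {k m : ℕ} (U : Set (Fin m → FreeGroup (Fin k))) (n : ℕ) : ℕ :=
  Set.ncard {T | T ∈ U ∧ ∀ i, wlen (T i) = n}

/-- `U` is an exponentially generic subset of `C_{m,A}`:
`γ(n,U)/γ(n,C_{m,A}) → 1` exponentially fast. -/
def ExpGenericIn {k m : ℕ} (U : Set (Fin m → FreeGroup (Fin k))) : Prop :=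
  U ⊆ Cset k m ∧ ∃ C : ℝ, 0 < C ∧ ∃ q : ℝ, 0 < q ∧ q < 1 ∧
    ∀ n : ℕ, |((gammaA U n : ℝ) / (gammaA (Cset k m) n : ℝ)) - 1| ≤ C * q ^ n

/-- `u` is a (contiguous) subword of `w`. -/
def Subword {α : Type} (u w : List (α × Bool)) : Prop :=
  ∃ s t : List (α × Bool), w = s ++ u ++ t


namespace S12

open List

variable {k : ℕ}

abbrev A (k : ℕ) := Fin k × Bool

def inv' (a : A k) : A k := (a.1, !a.2)

@[simp] lemma inv'_inv' (a : A k) : inv' (inv' a) = a := by simp [inv']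

lemma eq_inv'_iff {x y : A k} : x = inv' y ↔ x.1 = y.1 ∧ x.2 = !y.2 := by
  simp [inv', Prod.ext_iff]

lemma ne_inv'_comm {a b : A k} : a ≠ inv' b ↔ b ≠ inv' a := by
  constructor <;> (intro h hc; apply h; rw [hc, inv'_inv'])

def RedL (L : List (A k)) : Prop := List.Chain' (fun a b => b ≠ inv' a) L

lemma redL_reduce (L : List (A k)) : RedL (FreeGroup.reduce L) := by
  induction L with
  | nil => simp [RedL, List.Chain']
  | cons x L ih =>
    rw [FreeGroup.reduce.cons]
    revert ih
    cases h : FreeGroup.reduce L with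
    | nil => intro _; simp [RedL, List.Chain']
    | cons hd tl =>
      intro ih
      by_cases hc : x.1 = hd.1 ∧ x.2 = !hd.2
      · simp only [if_pos hc]
        exact ih.tail
      · simp only [if_neg hc]
        rw [RedL, List.Chain', List.isChain_cons_cons]
        refine ⟨fun he => hc (eq_inv'_iff.mp ?_), ih⟩
        rw [he, inv'_inv']

lemma reduce_eq_self : ∀ {L : List (A k)}, RedL L → FreeGroup.reduce L = L := by
  intro L
  induction L with
  | nil => intro _; rfl
  | cons x L ih =>
    intro h
    have hL : RedL L := h.tail
    rw [FreeGroup.reduce.cons, ih hL]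
    cases L with
    | nil => rfl
    | cons y t =>
      have hxy : y ≠ inv' x := (List.isChain_cons_cons.mp h).1
      have hcc : ¬(x.1 = y.1 ∧ x.2 = !y.2) := by
        intro hc
        exact hxy (by rw [eq_inv'_iff.mpr hc, inv'_inv'])
      simp only [if_neg hcc]

lemma redL_toWord (g : FreeGroup (Fin k)) : RedL g.toWord := by
  rw [← FreeGroup.reduce_toWord g]; exact redL_reduce _

lemma toWord_mk_red {L : List (A k)} (h : RedL L) : (FreeGroup.mk L).toWord = L := by
  rw [FreeGroup.toWord_mk, reduce_eq_self h]

/-! ### code machinery -/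

lemma card_A (k : ℕ) : Fintype.card (A k) = 2 * k := by
  simp [mul_comm]

lemma card_ne (a : A k) : Fintype.card {b : A k // b ≠ inv' a} = 2 * k - 1 := by
  classical
  have := Fintype.card_subtype_compl (fun b : A k => b = inv' a)
  rw [Fintype.card_subtype_eq, card_A] at this
  convert this using 2

noncomputable def nxtE (a : A k) : Fin (2 * k - 1) ≃ {b : A k // b ≠ inv' a} :=
  Fintype.equivOfCardEq (by rw [card_ne a, Fintype.card_fin])

noncomputable def nxt (a : A k) (j : Fin (2 * k - 1)) : A k := (nxtE a j).1

lemma nxt_ne (a : A k) (j) : nxt a j ≠ inv' a := (nxtE a j).2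

lemma nxt_inj (a : A k) : Function.Injective (nxt a) :=
  fun _ _ h => (nxtE a).injective (Subtype.ext h)

noncomputable def enc (hk : 2 ≤ k) (a b : A k) : Fin (2 * k - 1) :=
  if h : b ≠ inv' a then (nxtE a).symm ⟨b, h⟩ else ⟨0, by omega⟩

lemma nxt_enc (hk : 2 ≤ k) {a b : A k} (h : b ≠ inv' a) : nxt a (enc hk a b) = b := by
  rw [enc, dif_pos h, nxt, (nxtE a).apply_symm_apply]

noncomputable def decode (a : A k) : List (Fin (2 * k - 1)) → List (A k)
  | [] => [a]
  | j :: c => a :: decode (nxt a j) c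

@[simp] lemma decode_nil (a : A k) : decode a [] = [a] := rfl

@[simp] lemma decode_cons (a : A k) (j) (c) : decode a (j :: c) = a :: decode (nxt a j) c := rfl

@[simp] lemma length_decode (a : A k) (c) : (decode a c).length = c.length + 1 := by
  induction c generalizing a with
  | nil => rfl
  | cons j c ih => simp [ih]

lemma decode_ne_nil (a : A k) (c) : decode a c ≠ [] := by
  cases c <;> simp

lemma decode_eq_cons (a : A k) (c) : ∃ t, decode a c = a :: t := by
  cases c with
  | nil => exact ⟨[], rfl⟩
  | cons j c => exact ⟨_, rfl⟩

@[simp] lemma head?_decode (a : A k) (c) : (decode a c).head? = some a := by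
  obtain ⟨t, ht⟩ := decode_eq_cons a c
  rw [ht]; rfl

lemma redL_decode (a : A k) (c) : RedL (decode a c) := by
  induction c generalizing a with
  | nil => simp [RedL, List.Chain']
  | cons j c ih =>
    obtain ⟨t, ht⟩ := decode_eq_cons (nxt a j) c
    rw [decode_cons, RedL, ht, List.Chain', List.isChain_cons_cons]
    exact ⟨by rw [← ht] at *; exact nxt_ne a j, by rw [← ht]; exact ih _⟩

noncomputable def lst (a : A k) (c : List (Fin (2 * k - 1))) : A k :=
  (decode a c).getLast (decode_ne_nil a c)

@[simp] lemma lst_nil (a : A k) : lst a [] = a := rfl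

@[simp] lemma lst_cons (a : A k) (j) (c) : lst a (j :: c) = lst (nxt a j) c := by
  rw [lst, lst]
  exact List.getLast_cons _

lemma decode_append (a : A k) (c₁ c₂) :
    decode a (c₁ ++ c₂) = decode a c₁ ++ (decode (lst a c₁) c₂).tail := by
  induction c₁ generalizing a with
  | nil =>
    obtain ⟨t, ht⟩ := decode_eq_cons a c₂
    simp [ht]
  | cons j c ih => simp [ih]

lemma lst_append (a : A k) (c₁ c₂) : lst a (c₁ ++ c₂) = lst (lst a c₁) c₂ := by
  induction c₁ generalizing a with
  | nil => simp
  | cons j c ih => simp [ih]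

@[simp] lemma lst_singleton (a : A k) (j) : lst a [j] = nxt a j := by
  simp [lst]

lemma decode_injective {a a' : A k} {c c'} (h : decode a c = decode a' c') :
    a = a' ∧ c = c' := by
  induction c generalizing a a' c' with
  | nil =>
    cases c' with
    | nil => simpa using h
    | cons j' c'' =>
      exfalso
      have := congrArg List.length h
      simp at this
  | cons j c ih =>
    cases c' with
    | nil =>
      exfalso
      have := congrArg List.length h
      simp at this
    | cons j' c'' =>
      simp only [decode_cons, List.cons.injEq] at h
      obtain ⟨h1, h2⟩ := h
      subst h1
      obtain ⟨hn, hc⟩ := ih h2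
      have : j = j' := nxt_inj a hn
      exact ⟨rfl, by rw [this, hc]⟩

lemma decode_surj (hk : 2 ≤ k) : ∀ {L : List (A k)}, RedL L → L ≠ [] →
    ∃ a c, decode a c = L := by
  intro L
  induction L with
  | nil => intro _ h; exact absurd rfl h
  | cons a t ih =>
    intro h _
    cases t with
    | nil => exact ⟨a, [], rfl⟩
    | cons b t' =>
      obtain ⟨a', c, hc⟩ := ih h.tail (by simp)
      have hb : a' = b := by
        have h2 := head?_decode a' c
        rw [hc] at h2
        simpa using h2.symm
      subst hb
      have hba : a' ≠ inv' a := (List.isChain_cons_cons.mp h).1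
      refine ⟨a, enc hk a a' :: c, ?_⟩
      rw [decode_cons, nxt_enc hk hba, hc]

noncomputable def encodeFrom (hk : 2 ≤ k) : A k → List (A k) → List (Fin (2 * k - 1))
  | _, [] => []
  | p, b :: ws => enc hk p b :: encodeFrom hk b ws

@[simp] lemma length_encodeFrom (hk : 2 ≤ k) (p : A k) (ws) :
    (encodeFrom hk p ws).length = ws.length := by
  induction ws generalizing p with
  | nil => rfl
  | cons b ws ih => simp [encodeFrom, ih]

lemma decode_encodeFrom (hk : 2 ≤ k) {p : A k} {ws} (h : List.Chain (fun a b => b ≠ inv' a) p ws) :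
    decode p (encodeFrom hk p ws) = p :: ws := by
  induction ws generalizing p with
  | nil => rfl
  | cons b ws ih =>
    rw [List.Chain, List.isChain_cons_cons] at h
    rw [encodeFrom, decode_cons, nxt_enc hk h.1, ih h.2]


/-! ### generic counting helpers -/

lemma card_subtype_le_of_imp {X : Type} [Finite X] {p q : X → Prop} (h : ∀ x, p x → q x) :
    Nat.card {x // p x} ≤ Nat.card {x // q x} :=
  Nat.card_le_card_of_injective (fun x => ⟨x.1, h _ x.2⟩) (by
    intro x y hxy
    simp only [Subtype.mk.injEq] at hxy
    exact Subtype.ext hxy)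

lemma card_subtype_le_card {X : Type} [Finite X] (p : X → Prop) :
    Nat.card {x // p x} ≤ Nat.card X :=
  Nat.card_le_card_of_injective Subtype.val Subtype.val_injective

lemma card_add_compl {X : Type} [Finite X] (p : X → Prop) :
    Nat.card {x // p x} + Nat.card {x // ¬ p x} = Nat.card X := by
  classical
  rw [← Nat.card_sum]
  exact Nat.card_congr (Equiv.sumCompl p)

lemma card_subtype_and_add {X : Type} [Finite X] (p q : X → Prop) :
    Nat.card {x // p x ∧ q x} + Nat.card {x // p x ∧ ¬ q x} = Nat.card {x // p x} := by
  classical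
  have e1 : {x // p x ∧ q x} ≃ {y : {x // p x} // q y.val} :=
    ⟨fun x => ⟨⟨x.1, x.2.1⟩, x.2.2⟩, fun y => ⟨y.1.1, y.1.2, y.2⟩,
     fun _ => rfl, fun _ => rfl⟩
  have e2 : {x // p x ∧ ¬ q x} ≃ {y : {x // p x} // ¬ q y.val} :=
    ⟨fun x => ⟨⟨x.1, x.2.1⟩, x.2.2⟩, fun y => ⟨y.1.1, y.1.2, y.2⟩,
     fun _ => rfl, fun _ => rfl⟩
  rw [Nat.card_congr e1, Nat.card_congr e2, card_add_compl]

lemma natCard_sigma {ι : Type} [Fintype ι] (F : ι → Type) [∀ i, Finite (F i)] :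
    Nat.card ((i : ι) × F i) = ∑ i, Nat.card (F i) := by
  classical
  letI : ∀ i, Fintype (F i) := fun i => Fintype.ofFinite _
  simp [Nat.card_eq_fintype_card]

def prodSubtypeSigmaEquiv {X Y : Type} (Q : X → Y → Prop) :
    {z : X × Y // Q z.1 z.2} ≃ (x : X) × {y : Y // Q x y} where
  toFun z := ⟨z.1.1, ⟨z.1.2, z.2⟩⟩
  invFun s := ⟨(s.1, s.2.1), s.2.2⟩
  left_inv z := rfl
  right_inv s := rfl

lemma card_prod_subtype_le {X Y : Type} [Fintype X] [Finite Y] (Q : X → Y → Prop) (bd : ℕ)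
    (h : ∀ x, Nat.card {y : Y // Q x y} ≤ bd) :
    Nat.card {z : X × Y // Q z.1 z.2} ≤ Fintype.card X * bd := by
  classical
  rw [Nat.card_congr (prodSubtypeSigmaEquiv Q), natCard_sigma]
  calc ∑ x, Nat.card {y : Y // Q x y} ≤ Finset.univ.card • bd :=
        Finset.sum_le_card_nsmul _ _ _ (fun x _ => h x)
    _ = Fintype.card X * bd := by rw [Finset.card_univ, smul_eq_mul]

lemma card_prod_subtype_ge {X Y : Type} [Fintype X] [Finite Y] (Q : X → Y → Prop) (bd : ℕ)
    (h : ∀ x, bd ≤ Nat.card {y : Y // Q x y}) :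
    Fintype.card X * bd ≤ Nat.card {z : X × Y // Q z.1 z.2} := by
  classical
  rw [Nat.card_congr (prodSubtypeSigmaEquiv Q), natCard_sigma]
  calc (Fintype.card X) * bd = Finset.univ.card • bd := by rw [Finset.card_univ, smul_eq_mul]
    _ ≤ ∑ x, Nat.card {y : Y // Q x y} := Finset.card_nsmul_le_sum _ _ _ (fun x _ => h x)

/-! ### codes -/

abbrev Codes (k M : ℕ) := {c : List (Fin (2 * k - 1)) // c.length = M}

noncomputable instance (k M : ℕ) : Fintype (Codes k M) :=
  inferInstanceAs (Fintype (List.Vector (Fin (2 * k - 1)) M))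

lemma card_codes (k M : ℕ) : Nat.card (Codes k M) = (2 * k - 1) ^ M := by
  rw [Nat.card_eq_fintype_card]
  have : Fintype.card (List.Vector (Fin (2 * k - 1)) M) = (2 * k - 1) ^ M := by
    rw [card_vector, Fintype.card_fin]
  exact this

lemma card_codes_subtype_le {k M : ℕ} (P : Codes k M → Prop) :
    Nat.card {c : Codes k M // P c} ≤ (2 * k - 1) ^ M := by
  rw [← card_codes k M]; exact card_subtype_le_card _

lemma card_codes_ne {k M : ℕ} (v : List (Fin (2 * k - 1))) (hv : v.length = M) :
    Nat.card {c : Codes k M // c.1 ≠ v} ≤ (2 * k - 1) ^ M - 1 := by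
  classical
  have h := card_add_compl (X := Codes k M) (fun c => c.1 ≠ v)
  rw [card_codes] at h
  have h1 : 0 < Nat.card {c : Codes k M // ¬ c.1 ≠ v} := by
    have : Nonempty {c : Codes k M // ¬ c.1 ≠ v} := ⟨⟨⟨v, hv⟩, by simp⟩⟩
    exact Nat.card_pos
  omega

def splitEquiv (k M₁ M₂ : ℕ) (Q : List (Fin (2 * k - 1)) → Prop) :
    {c : Codes k (M₁ + M₂) // Q c.1} ≃ (u : Codes k M₁) × {v : Codes k M₂ // Q (u.1 ++ v.1)} where
  toFun c := ⟨⟨c.1.1.take M₁, by rw [List.length_take, c.1.2]; omega⟩,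
              ⟨⟨c.1.1.drop M₁, by rw [List.length_drop, c.1.2]; omega⟩,
               by rw [List.take_append_drop]; exact c.2⟩⟩
  invFun s := ⟨⟨s.1.1 ++ s.2.1.1, by rw [List.length_append, s.1.2, s.2.1.2]⟩, s.2.2⟩
  left_inv c := Subtype.ext (Subtype.ext (List.take_append_drop _ _))
  right_inv s := by
    obtain ⟨u, v, hv⟩ := s
    have h1 : ((u.1 ++ v.1).take M₁) = u.1 := List.take_left' u.2
    have h2 : ((u.1 ++ v.1).drop M₁) = v.1 := List.drop_left' u.2
    apply Sigma.ext
    · exact Subtype.ext h1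
    · rw [Subtype.heq_iff_coe_eq]
      · exact Subtype.ext h2
      · intro x; dsimp only; rw [h1]

/-! ### the avoidance bound -/

lemma mini_count {k : ℕ} (p s : ℕ) (forb : List (Fin (2 * k - 1)) → List (Fin (2 * k - 1)))
    (hf : ∀ x, (forb x).length = s) :
    Nat.card {u : Codes k (p + s) // (u.1.drop p).take s ≠ forb (u.1.take p)}
      ≤ (2 * k - 1) ^ p * ((2 * k - 1) ^ s - 1) := by
  classical
  rw [Nat.card_congr (splitEquiv k p s (fun l => (l.drop p).take s ≠ forb (l.take p))),
    natCard_sigma]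
  have key : ∀ u₁ : Codes k p,
      Nat.card {b : Codes k s // ((u₁.1 ++ b.1).drop p).take s ≠ forb ((u₁.1 ++ b.1).take p)}
        ≤ (2 * k - 1) ^ s - 1 := by
    intro u₁
    have e : ∀ b : Codes k s,
        (((u₁.1 ++ b.1).drop p).take s ≠ forb ((u₁.1 ++ b.1).take p)) ↔ b.1 ≠ forb u₁.1 := by
      intro b
      rw [List.drop_left' u₁.2, List.take_left' u₁.2,
        List.take_of_length_le (le_of_eq b.2)]
    rw [Nat.card_congr (Equiv.subtypeEquivRight e)]
    exact card_codes_ne _ (hf _)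
  calc ∑ u₁, Nat.card {b : Codes k s //
          ((u₁.1 ++ b.1).drop p).take s ≠ forb ((u₁.1 ++ b.1).take p)}
      ≤ Finset.univ.card • ((2 * k - 1) ^ s - 1) :=
        Finset.sum_le_card_nsmul _ _ _ (fun x _ => key x)
    _ = (2 * k - 1) ^ p * ((2 * k - 1) ^ s - 1) := by
        rw [Finset.card_univ, smul_eq_mul, ← Nat.card_eq_fintype_card, card_codes]

lemma avoid_bound {k : ℕ} (s : ℕ) : ∀ (B p M M' : ℕ), M = p + B * s + M' →
    ∀ forb : List (Fin (2 * k - 1)) → List (Fin (2 * k - 1)), (∀ x, (forb x).length = s) →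
    Nat.card {c : Codes k M // ∀ j < B, (c.1.drop (p + j * s)).take s ≠ forb (c.1.take (p + j * s))}
      ≤ (2 * k - 1) ^ p * (((2 * k - 1) ^ s - 1) ^ B * (2 * k - 1) ^ M') := by
  intro B
  induction B with
  | zero =>
    intro p M M' hM forb hf
    subst hM
    calc Nat.card _ ≤ (2 * k - 1) ^ (p + 0 * s + M') := card_codes_subtype_le _
      _ = (2 * k - 1) ^ p * (((2 * k - 1) ^ s - 1) ^ 0 * (2 * k - 1) ^ M') := by
          simp [pow_add]
  | succ B ih =>
    intro p M M' hM forb hf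
    classical
    have hM' : M = (p + s) + (B * s + M') := by
      have : (B + 1) * s = s + B * s := by ring
      omega
    subst hM'
    rw [Nat.card_congr (splitEquiv k (p + s) (B * s + M')
      (fun l => ∀ j < B + 1, (l.drop (p + j * s)).take s ≠ forb (l.take (p + j * s)))),
      natCard_sigma]
    set bd := ((2 * k - 1) ^ s - 1) ^ B * (2 * k - 1) ^ M' with hbd
    set cond : Codes k (p + s) → Prop := fun u => (u.1.drop p).take s ≠ forb (u.1.take p)
      with hcond
    have key : ∀ u : Codes k (p + s),
        Nat.card {v : Codes k (B * s + M') //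
          ∀ j < B + 1, ((u.1 ++ v.1).drop (p + j * s)).take s
            ≠ forb ((u.1 ++ v.1).take (p + j * s))}
          ≤ if cond u then bd else 0 := by
      intro u
      by_cases hc : cond u
      · rw [if_pos hc]
        calc Nat.card {v : Codes k (B * s + M') //
              ∀ j < B + 1, ((u.1 ++ v.1).drop (p + j * s)).take s
                ≠ forb ((u.1 ++ v.1).take (p + j * s))}
            ≤ Nat.card {v : Codes k (B * s + M') //
              ∀ j < B, (v.1.drop (0 + j * s)).take s
                ≠ forb (u.1 ++ v.1.take (0 + j * s))} := by
              apply card_subtype_le_of_imp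
              intro v hv j hj
              have h1 := hv (j + 1) (by omega)
              have harith : p + (j + 1) * s = u.1.length + j * s := by rw [u.2]; ring
              rw [harith, List.drop_length_add_append, List.take_length_add_append] at h1
              simpa using h1
          _ ≤ (2 * k - 1) ^ 0 * (((2 * k - 1) ^ s - 1) ^ B * (2 * k - 1) ^ M') :=
              ih 0 (B * s + M') M' (by ring) (fun x => forb (u.1 ++ x)) (fun x => hf _)
          _ = bd := by rw [pow_zero, one_mul]
      · rw [if_neg hc]
        have hempty : IsEmpty {v : Codes k (B * s + M') //
            ∀ j < B + 1, ((u.1 ++ v.1).drop (p + j * s)).take s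
              ≠ forb ((u.1 ++ v.1).take (p + j * s))} := by
          constructor
          rintro ⟨v, hv⟩
          have h0 := hv 0 (by omega)
          rw [show p + 0 * s = p by ring] at h0
          apply h0
          have hlen : (u.1.drop p).length = s := by rw [List.length_drop, u.2]; omega
          rw [List.drop_append_of_le_length (by rw [u.2]; omega),
            List.take_left' hlen,
            List.take_append_of_le_length (by rw [u.2]; omega)]
          have hcc := not_not.mp hc
          rw [List.take_of_length_le hlen.le] at hcc
          exact hcc
        rw [Nat.card_of_isEmpty]
    calc (∑ u : Codes k (p + s), Nat.card {v : Codes k (B * s + M') //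
            ∀ j < B + 1, ((u.1 ++ v.1).drop (p + j * s)).take s
              ≠ forb ((u.1 ++ v.1).take (p + j * s))})
        ≤ ∑ u : Codes k (p + s), (if cond u then bd else 0) :=
          Finset.sum_le_sum (fun u _ => key u)
      _ = (Finset.univ.filter cond).card * bd := by
          rw [Finset.sum_ite, Finset.sum_const, Finset.sum_const_zero, add_zero, smul_eq_mul]
      _ = Nat.card {u : Codes k (p + s) // cond u} * bd := by
          rw [Nat.card_eq_fintype_card, Fintype.card_subtype]
      _ ≤ ((2 * k - 1) ^ p * ((2 * k - 1) ^ s - 1)) * bd :=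
          Nat.mul_le_mul_right _ (mini_count p s forb hf)
      _ = (2 * k - 1) ^ p * (((2 * k - 1) ^ s - 1) ^ (B + 1) * (2 * k - 1) ^ M') := by
          rw [hbd]; ring


/-! ### part 3 -/

lemma subword_iff_infix {u w : List (A k)} : Subword u w ↔ u <:+: w :=
  ⟨fun ⟨s, t, h⟩ => ⟨s, t, h.symm⟩, fun ⟨s, t, h⟩ => ⟨s, t, h.symm⟩⟩

lemma pick_exists (hk : 2 ≤ k) (u₁ u₂ : A k) : ∃ y : A k, y ≠ u₁ ∧ y ≠ u₂ := by
  classical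
  have h2 : ({u₁, u₂} : Finset (A k)).card ≤ 2 := by
    apply le_trans (Finset.card_insert_le _ _)
    simp
  have h3 : (Finset.univ : Finset (A k)).card - ({u₁, u₂} : Finset (A k)).card
      ≤ (Finset.univ \ ({u₁, u₂} : Finset (A k))).card := Finset.le_card_sdiff _ _
  have h4 : (Finset.univ : Finset (A k)).card = 2 * k := by
    rw [Finset.card_univ, card_A]
  have h5 : (Finset.univ \ ({u₁, u₂} : Finset (A k))).Nonempty := by
    rw [← Finset.card_pos]; omega
  obtain ⟨y, hy⟩ := h5
  rw [Finset.mem_sdiff, Finset.mem_insert, Finset.mem_singleton] at hy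
  push_neg at hy
  exact ⟨y, hy.2⟩

noncomputable def pickY (hk : 2 ≤ k) (u₁ u₂ : A k) : A k := (pick_exists hk u₁ u₂).choose

lemma pickY_ne₁ (hk : 2 ≤ k) (u₁ u₂ : A k) : pickY hk u₁ u₂ ≠ u₁ :=
  (pick_exists hk u₁ u₂).choose_spec.1

lemma pickY_ne₂ (hk : 2 ≤ k) (u₁ u₂ : A k) : pickY hk u₁ u₂ ≠ u₂ :=
  (pick_exists hk u₁ u₂).choose_spec.2

/-- the forbidden block: given first letter `a` and the digits `x` before the
block, the code whose block would create an occurrence of `W`. -/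
noncomputable def forbF (hk : 2 ≤ k) (W : List (A k)) (a : A k)
    (x : List (Fin (2 * k - 1))) : List (Fin (2 * k - 1)) :=
  match W with
  | [] => []
  | b :: _ =>
    encodeFrom hk (lst a x) (pickY hk (inv' (lst a x)) (inv' b) :: W)

lemma length_forbF (hk : 2 ≤ k) {W : List (A k)} {b W'} (hW : W = b :: W') (a : A k) (x) :
    (forbF hk W a x).length = W.length + 1 := by
  subst hW
  rw [forbF, length_encodeFrom]
  rfl

/-- an exact occurrence inside the window gives an infix of the window. -/
lemma infix_window {α : Type} {L W : List α} {t P L0 : ℕ}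
    (h : W <+: L.drop t) (h1 : P ≤ t) (h2 : t + W.length ≤ P + L0) :
    W <:+: (L.drop P).take L0 := by
  set X := L.drop P with hX
  have hd : X.drop (t - P) = L.drop t := by
    rw [hX, List.drop_drop]
    congr 1
    omega
  have hW : (X.drop (t - P)).take W.length = W := by
    rw [hd]
    exact (List.prefix_iff_eq_take.mp h).symm
  have hsuf : (X.drop (t - P)).take W.length <:+ X.take ((t - P) + W.length) :=
    ⟨X.take (t - P), (List.take_add).symm⟩
  have hpre : X.take ((t - P) + W.length) <+: X.take L0 := by
    have he : X.take ((t - P) + W.length) = (X.take L0).take ((t - P) + W.length) := by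
      rw [List.take_take, inf_eq_left.mpr (by omega)]
    rw [he]
    exact List.take_prefix _ _
  rw [hW] at hsuf
  exact hsuf.isInfix.trans hpre.isInfix

/-- every reduced word extends to a reduced word of any bigger length. -/
lemma exists_extension (hk : 2 ≤ k) :
    ∀ (j : ℕ) {L : List (A k)}, RedL L →
      ∃ W : List (A k), RedL W ∧ W.length = L.length + j ∧ L <+: W := by
  intro j
  induction j with
  | zero => intro L h; exact ⟨L, h, rfl, List.prefix_refl L⟩
  | succ j ih =>
    intro L h
    have hD : 0 < 2 * k - 1 := by omega
    by_cases hL : L = []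
    · subst hL
      obtain ⟨W, h1, h2, h3⟩ := ih (L := [((⟨0, by omega⟩ : Fin k), true)]) (by simp [RedL, List.Chain'])
      refine ⟨W, h1, ?_, (List.nil_prefix).trans h3⟩
      simp only [List.length_singleton] at h2
      simp only [List.length_nil]
      omega
    · set b := nxt (L.getLast hL) ⟨0, hD⟩ with hb
      have hred : RedL (L ++ [b]) := by
        rw [RedL, List.Chain', List.isChain_append]
        refine ⟨h, by simp [RedL], ?_⟩
        intro x hx y hy
        rw [List.getLast?_eq_getLast hL, Option.mem_some_iff] at hx
        simp only [List.head?_cons, Option.mem_some_iff] at hy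
        subst hx; subst hy
        exact nxt_ne _ _
      obtain ⟨W, h1, h2, h3⟩ := ih hred
      refine ⟨W, h1, ?_, (List.prefix_append L [b]).trans h3⟩
      rw [h2]
      simp only [List.length_append, List.length_singleton]
      omega

/-- Step A : a failure of the genericity property yields a missed window. -/
lemma bad_structure (hk : 2 ≤ k) (K : ℕ) (lam : ℝ) {n : ℕ} {L : List (A k)}
    (hlen : L.length = n)
    (hbad : ¬ (∀ s : List (Fin k × Bool), Subword s L →
      lam * (L.length : ℝ) ≤ (s.length : ℝ) →
      ∀ w : FreeGroup (Fin k), w.toWord.length ≤ K → Subword w.toWord s)) :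
    ∃ P, P + ⌈lam * (n : ℝ)⌉₊ ≤ n ∧ ∃ W : List (A k), RedL W ∧ W.length = K ∧
      ¬ W <:+: ((L.drop P).take ⌈lam * (n : ℝ)⌉₊) := by
  push_neg at hbad
  obtain ⟨s, hsub, hslen, w, hwK, hwmiss⟩ := hbad
  obtain ⟨u, v, huv⟩ := hsub
  set L0 := ⌈lam * (n : ℝ)⌉₊ with hL0
  have hL0s : L0 ≤ s.length := by
    rw [hL0]
    rw [Nat.ceil_le]
    rw [hlen] at hslen
    exact hslen
  have hlsum : L.length = u.length + s.length + v.length := by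
    rw [huv]; simp; omega
  refine ⟨u.length, by omega, ?_⟩
  obtain ⟨W, hWr, hWl, hWpre⟩ := exists_extension hk (K - w.toWord.length) (redL_toWord w)
  refine ⟨W, hWr, by rw [hWl]; omega, fun hinf => hwmiss ?_⟩
  have hwin : (L.drop u.length).take L0 = s.take L0 := by
    rw [huv, List.append_assoc, List.drop_left, List.take_append_of_le_length hL0s]
  rw [hwin] at hinf
  rw [subword_iff_infix]
  exact (hWpre.isInfix.trans hinf).trans (List.take_prefix _ _).isInfix

/-- Step C (the heart): if a window misses `W`, every block of digits differs
from the forbidden block. -/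
lemma blocks_of_miss (hk : 2 ≤ k) {K L0 : ℕ} (hK : 1 ≤ K) {W : List (A k)}
    (hWr : RedL W) (hWl : W.length = K)
    {M : ℕ} (a : A k) (c : List (Fin (2 * k - 1))) (hc : c.length = M)
    {P : ℕ} (hP : P + L0 ≤ M + 1)
    (hmiss : ¬ W <:+: ((decode a c).drop P).take L0) :
    ∀ j, j < (L0 - 1) / (K + 1) →
      (c.drop (P + j * (K + 1))).take (K + 1) ≠ forbF hk W a (c.take (P + j * (K + 1))) := by
  intro j hj heq
  obtain ⟨b, W', rfl⟩ : ∃ b W', W = b :: W' := by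
    cases W with
    | nil => simp at hWl; omega
    | cons b W' => exact ⟨b, W', rfl⟩
  apply hmiss
  set B := (L0 - 1) / (K + 1) with hB
  have hBle : B * (K + 1) ≤ L0 - 1 := Nat.div_mul_le_self _ _
  have hjB : j + 1 ≤ B := hj
  have hjle : (j + 1) * (K + 1) ≤ L0 - 1 :=
    le_trans (Nat.mul_le_mul_right _ hjB) hBle
  have hL0 : K + 2 ≤ L0 := by
    have h6 : K + 1 ≤ L0 - 1 := by
      calc K + 1 = 1 * (K + 1) := (one_mul _).symm
        _ ≤ (j + 1) * (K + 1) := Nat.mul_le_mul_right _ (by omega)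
        _ ≤ L0 - 1 := hjle
    omega
  set q := P + j * (K + 1) with hq
  have harith : q + (K + 1) = P + (j + 1) * (K + 1) := by rw [hq]; ring
  have hqM : q + (K + 1) ≤ M := by omega
  set x := c.take q with hx
  set r := c.drop q with hr
  have hxl : x.length = q := by rw [hx, List.length_take]; omega
  set prev := lst a x with hprev
  set y := pickY hk (inv' prev) (inv' b) with hy
  have hblk : r.take (K + 1) = encodeFrom hk prev (y :: b :: W') := by
    rw [heq]; rfl
  set r' := r.drop (K + 1) with hr'
  have hchain : List.Chain (fun a b => b ≠ inv' a) prev (y :: b :: W') := by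
    rw [List.Chain, List.isChain_cons_cons]
    refine ⟨pickY_ne₁ hk _ _, ?_⟩
    rw [List.isChain_cons_cons]
    exact ⟨ne_inv'_comm.mp (pickY_ne₂ hk _ _), hWr⟩
  have hdecblk : decode prev (r.take (K + 1)) = prev :: y :: b :: W' := by
    rw [hblk, decode_encodeFrom hk hchain]
  have hdec : decode a c = (decode a x ++ [y]) ++
      ((b :: W') ++ (decode (lst prev (r.take (K + 1))) r').tail) := by
    conv_lhs => rw [← List.take_append_drop q c]
    rw [← hx, ← hr, decode_append, ← hprev]
    conv_lhs => rw [← List.take_append_drop (K + 1) r, ← hr']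
    rw [decode_append, hdecblk]
    simp
  have hpre2 : (b :: W') <+: (decode a c).drop (q + 2) := by
    rw [hdec, List.drop_left' (by rw [List.length_append, length_decode, hxl]; simp)]
    exact ⟨_, rfl⟩
  apply infix_window hpre2 (by omega)
  rw [hWl]
  have h7 : q + 2 + K = P + (j + 1) * (K + 1) + 1 := by rw [hq]; ring
  omega


/-! ### part 4: transfer equivalences and counting -/

def CycLP (L : List (A k)) : Prop :=
  ∀ x y : Fin k × Bool, L.head? = some x → L.getLast? = some y → x ≠ (y.1, !y.2)

def GoodP (K : ℕ) (lam : ℝ) (L : List (A k)) : Prop :=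
  ∀ s : List (Fin k × Bool), Subword s L → lam * (L.length : ℝ) ≤ (s.length : ℝ) →
    ∀ w : FreeGroup (Fin k), w.toWord.length ≤ K → Subword w.toWord s

noncomputable def fgEquiv (P : List (A k) → Prop) :
    {g : FreeGroup (Fin k) // P g.toWord} ≃ {L : List (A k) // RedL L ∧ P L} := by
  apply Equiv.ofBijective (fun g => ⟨g.1.toWord, redL_toWord g.1, g.2⟩)
  constructor
  · intro g₁ g₂ h
    simp only [Subtype.mk.injEq] at h
    exact Subtype.ext (FreeGroup.toWord_injective h)
  · intro L
    exact ⟨⟨FreeGroup.mk L.1, by rw [toWord_mk_red L.2.1]; exact L.2.2⟩,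
      Subtype.ext (toWord_mk_red L.2.1)⟩

noncomputable def listCode (hk : 2 ≤ k) (M : ℕ) (P : List (A k) → Prop) :
    {L : List (A k) // RedL L ∧ L.length = M + 1 ∧ P L} ≃
      {z : A k × Codes k M // P (decode z.1 z.2.1)} :=
  Equiv.symm (by
    apply Equiv.ofBijective (fun z : {z : A k × Codes k M // P (decode z.1 z.2.1)} =>
      (⟨decode z.1.1 z.1.2.1, redL_decode _ _, by rw [length_decode, z.1.2.2], z.2⟩ :
        {L : List (A k) // RedL L ∧ L.length = M + 1 ∧ P L}))
    constructor
    · rintro ⟨⟨a₁, c₁⟩, h₁⟩ ⟨⟨a₂, c₂⟩, h₂⟩ h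
      simp only [Subtype.mk.injEq] at h
      obtain ⟨ha, hc⟩ := decode_injective h
      subst ha
      apply Subtype.ext
      simp only [Prod.mk.injEq]
      exact ⟨trivial, Subtype.ext hc⟩
    · rintro ⟨L, hr, hl, hp⟩
      obtain ⟨a, c, hdc⟩ := decode_surj hk hr
        (by intro hnil; rw [hnil] at hl; simp at hl)
      have hcl : c.length = M := by
        have := length_decode a c; rw [hdc, hl] at this; omega
      exact ⟨⟨(a, ⟨c, hcl⟩), by rw [hdc]; exact hp⟩, Subtype.ext hdc⟩)

def piSubtypeEquiv {X : Type} (m : ℕ) (Q : X → Prop) :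
    {T : Fin m → X // ∀ i, Q (T i)} ≃ (Fin m → {x : X // Q x}) where
  toFun T i := ⟨T.1 i, T.2 i⟩
  invFun f := ⟨fun i => (f i).1, fun i => (f i).2⟩
  left_inv T := rfl
  right_inv f := rfl

lemma card_tuple {X : Type} (m : ℕ) (Q : X → Prop) :
    Nat.card {T : Fin m → X // ∀ i, Q (T i)} = (Nat.card {x : X // Q x}) ^ m := by
  rw [Nat.card_congr (piSubtypeEquiv m Q), Nat.card_pi]
  rw [Finset.prod_const, Finset.card_univ, Fintype.card_fin]

lemma gamma_eq {k m : ℕ} (n : ℕ) (Q : FreeGroup (Fin k) → Prop)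
    (U : Set (Fin m → FreeGroup (Fin k)))
    (hU : ∀ T, (T ∈ U ∧ ∀ i, wlen (T i) = n) ↔ ∀ i, Q (T i)) :
    gammaA U n = (Nat.card {g : FreeGroup (Fin k) // Q g}) ^ m := by
  rw [gammaA, ← Nat.card_coe_set_eq]
  have he : {T | T ∈ U ∧ ∀ i, wlen (T i) = n} = {T | ∀ i, Q (T i)} :=
    Set.ext (fun T => hU T)
  rw [he]
  exact card_tuple m Q

lemma getLast?_decode (a : A k) (c) : (decode a c).getLast? = some (lst a c) :=
  List.getLast?_eq_getLast _

lemma cycLP_decode_iff (a : A k) (c) : CycLP (decode a c) ↔ a ≠ inv' (lst a c) := by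
  constructor
  · intro h; exact h a (lst a c) (head?_decode a c) (getLast?_decode a c)
  · intro h x y hx hy
    rw [head?_decode] at hx
    rw [getLast?_decode] at hy
    injection hx with hx
    injection hy with hy
    subst hx; subst hy
    exact h

lemma cyc_upper (k M : ℕ) :
    Nat.card {z : A k × Codes k M // CycLP (decode z.1 z.2.1)} ≤ 2 * k * (2 * k - 1) ^ M := by
  have h := card_prod_subtype_le (X := A k) (Y := Codes k M)
    (fun a c => CycLP (decode a c.1)) ((2 * k - 1) ^ M)
    (fun a => card_codes_subtype_le _)
  rw [card_A] at h
  exact h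

lemma cyc_lower (k M : ℕ) (hM : 1 ≤ M) :
    2 * k * ((2 * k - 1) ^ M - (2 * k - 1) ^ (M - 1)) ≤
      Nat.card {z : A k × Codes k M // CycLP (decode z.1 z.2.1)} := by
  have h := card_prod_subtype_ge (X := A k) (Y := Codes k M)
    (fun a c => CycLP (decode a c.1)) ((2 * k - 1) ^ M - (2 * k - 1) ^ (M - 1)) ?per
  · rw [card_A] at h; exact h
  case per =>
  intro a
  rw [Nat.card_congr (Equiv.subtypeEquivRight (fun c : Codes k M => cycLP_decode_iff a c.1))]
  have hcompl := card_add_compl (X := Codes k M) (fun c => a ≠ inv' (lst a c.1))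
  rw [card_codes] at hcompl
  have hbad : Nat.card {c : Codes k M // ¬ a ≠ inv' (lst a c.1)} ≤ (2 * k - 1) ^ (M - 1) := by
    rw [← card_codes k (M - 1)]
    apply Nat.card_le_card_of_injective
      (fun c => (⟨c.1.1.dropLast, by rw [List.length_dropLast, c.1.2]⟩ : Codes k (M - 1)))
    intro c₁ c₂ h
    simp only [Subtype.mk.injEq] at h
    have hne₁ : c₁.1.1 ≠ [] := by
      intro hnil; have h2 := c₁.1.2; rw [hnil] at h2; simp at h2; omega
    have hne₂ : c₂.1.1 ≠ [] := by
      intro hnil; have h2 := c₂.1.2; rw [hnil] at h2; simp at h2; omega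
    have hl₁ : lst a c₁.1.1 = inv' a := by
      have h2 := not_not.mp c₁.2
      conv_rhs => rw [h2, inv'_inv']
    have hl₂ : lst a c₂.1.1 = inv' a := by
      have h2 := not_not.mp c₂.2
      conv_rhs => rw [h2, inv'_inv']
    have hlst₁ : lst a c₁.1.1 = nxt (lst a c₁.1.1.dropLast) (c₁.1.1.getLast hne₁) := by
      conv_lhs => rw [← List.dropLast_append_getLast hne₁]
      rw [lst_append, lst_singleton]
    have hlst₂ : lst a c₂.1.1 = nxt (lst a c₂.1.1.dropLast) (c₂.1.1.getLast hne₂) := by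
      conv_lhs => rw [← List.dropLast_append_getLast hne₂]
      rw [lst_append, lst_singleton]
    have hgl : c₁.1.1.getLast hne₁ = c₂.1.1.getLast hne₂ := by
      apply nxt_inj (lst a c₁.1.1.dropLast)
      rw [← hlst₁, hl₁, h, ← hlst₂, hl₂]
    apply Subtype.ext; apply Subtype.ext
    conv_lhs => rw [← List.dropLast_append_getLast hne₁]
    conv_rhs => rw [← List.dropLast_append_getLast hne₂]
    rw [h, hgl]
  omega

lemma card_le_sigma_of_cover {X ι : Type} [Finite X] [Finite ι] (p : X → Prop)
    (S : ι → X → Prop) (h : ∀ x, p x → ∃ y, S y x) :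
    Nat.card {x // p x} ≤ Nat.card ((y : ι) × {x // S y x}) := by
  classical
  have hch : ∀ x : {x // p x}, ∃ y, S y x.1 := fun x => h x.1 x.2
  choose F hF using hch
  apply Nat.card_le_card_of_injective (fun x => (⟨F x, ⟨x.1, hF x⟩⟩ : (y : ι) × {x // S y x}))
  intro x₁ x₂ hx
  exact Subtype.ext (congrArg (fun s : (y : ι) × {x // S y x} => s.2.1) hx)


lemma bad_count (hk : 2 ≤ k) {K : ℕ} (hK : 1 ≤ K) (lam : ℝ) (hlam0 : 0 < lam) (M : ℕ)
    {L0 B : ℕ} (hL0 : L0 = ⌈lam * ((M + 1 : ℕ) : ℝ)⌉₊) (hB : B = (L0 - 1) / (K + 1)) :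
    Nat.card {z : A k × Codes k M // ¬ GoodP K lam (decode z.1 z.2.1)} ≤
      ((2 * k * (2 * k - 1) ^ (K - 1)) * (M + 1)) *
        (2 * k * (((2 * k - 1) ^ (K + 1) - 1) ^ B * (2 * k - 1) ^ (M - B * (K + 1)))) := by
  classical
  have hL0pos : 1 ≤ L0 := by
    rw [hL0]
    have hpos : (0:ℝ) < lam * ((M + 1 : ℕ) : ℝ) := by positivity
    exact Nat.ceil_pos.mpr hpos
  have hBle : B * (K + 1) ≤ L0 - 1 := by rw [hB]; exact Nat.div_mul_le_self _ _
  set S : ((A k × Codes k (K - 1)) × Fin (M + 1)) → (A k × Codes k M) → Prop := fun y z =>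
    ((y.2 : ℕ) + B * (K + 1) ≤ M) ∧ ∀ j < B,
      (z.2.1.drop ((y.2 : ℕ) + j * (K + 1))).take (K + 1)
        ≠ forbF hk (decode y.1.1 y.1.2.1) z.1 (z.2.1.take ((y.2 : ℕ) + j * (K + 1))) with hS
  have hcover : ∀ z : A k × Codes k M, ¬ GoodP K lam (decode z.1 z.2.1) → ∃ y, S y z := by
    intro z hz
    obtain ⟨P, hPle, W, hWr, hWl, hmiss⟩ :=
      bad_structure hk K lam (n := M + 1) (L := decode z.1 z.2.1)
        (by rw [length_decode, z.2.2]) hz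
    rw [← hL0] at hPle hmiss
    obtain ⟨aw, cw, hdw⟩ := decode_surj hk hWr
      (by intro hnil; rw [hnil] at hWl; simp at hWl; omega)
    have hcw : cw.length = K - 1 := by
      have := length_decode aw cw; rw [hdw, hWl] at this; omega
    have harith : P + B * (K + 1) ≤ M := by omega
    refine ⟨⟨(aw, ⟨cw, hcw⟩), ⟨P, by omega⟩⟩, harith, ?_⟩
    intro j hj
    have hj' : j < (L0 - 1) / (K + 1) := by rw [← hB]; exact hj
    have hblocks := blocks_of_miss hk hK hWr hWl z.1 z.2.1 z.2.2 (P := P)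
      hPle hmiss j hj'
    show (z.2.1.drop (P + j * (K + 1))).take (K + 1)
      ≠ forbF hk (decode aw cw) z.1 (z.2.1.take (P + j * (K + 1)))
    rw [hdw]
    exact hblocks
  have step1 := card_le_sigma_of_cover _ S hcover
  rw [natCard_sigma] at step1
  refine le_trans step1 ?_
  set bnd := 2 * k * (((2 * k - 1) ^ (K + 1) - 1) ^ B * (2 * k - 1) ^ (M - B * (K + 1)))
    with hbnd
  have hper : ∀ y, Nat.card {z : A k × Codes k M // S y z} ≤ bnd := by
    intro y
    by_cases harith : (y.2 : ℕ) + B * (K + 1) ≤ M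
    · set W := decode y.1.1 y.1.2.1 with hW
      set P : ℕ := (y.2 : ℕ) with hP
      obtain ⟨t, hWc⟩ := decode_eq_cons y.1.1 y.1.2.1
      have hWlen : W.length = K := by
        rw [hW, length_decode, y.1.2.2]; omega
      have hf : ∀ a : A k, ∀ x, (forbF hk W a x).length = K + 1 := by
        intro a x
        rw [length_forbF hk (by rw [hW]; exact hWc) a x, hWlen]
      calc Nat.card {z : A k × Codes k M // S y z}
          ≤ Nat.card {z : A k × Codes k M // (fun (a : A k) (c : Codes k M) => ∀ j < B,
              (c.1.drop (P + j * (K + 1))).take (K + 1)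
                ≠ forbF hk W a (c.1.take (P + j * (K + 1)))) z.1 z.2} := by
            apply card_subtype_le_of_imp
            intro z hz
            exact hz.2
        _ ≤ Fintype.card (A k) * (((2 * k - 1) ^ (K + 1) - 1) ^ B
              * (2 * k - 1) ^ (M - B * (K + 1))) := by
            refine card_prod_subtype_le (fun (a : A k) (c : Codes k M) => ∀ j < B,
              (c.1.drop (P + j * (K + 1))).take (K + 1)
                ≠ forbF hk W a (c.1.take (P + j * (K + 1)))) _ (fun a => ?_)
            calc Nat.card {c : Codes k M // ∀ j < B,
                  (c.1.drop (P + j * (K + 1))).take (K + 1)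
                    ≠ forbF hk W a (c.1.take (P + j * (K + 1)))}
                ≤ (2 * k - 1) ^ P * (((2 * k - 1) ^ (K + 1) - 1) ^ B
                    * (2 * k - 1) ^ (M - P - B * (K + 1))) :=
                  avoid_bound (K + 1) B P M (M - P - B * (K + 1)) (by omega)
                    (forbF hk W a) (hf a)
              _ = ((2 * k - 1) ^ (K + 1) - 1) ^ B * (2 * k - 1) ^ (M - B * (K + 1)) := by
                  rw [show M - B * (K + 1) = P + (M - P - B * (K + 1)) by omega, pow_add]
                  ring
        _ = bnd := by rw [card_A, hbnd]
    · have hem : IsEmpty {z : A k × Codes k M // S y z} := ⟨fun z => harith z.2.1⟩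
      rw [Nat.card_of_isEmpty]
      exact Nat.zero_le _
  calc (∑ y, Nat.card {z : A k × Codes k M // S y z})
      ≤ Finset.univ.card • bnd := Finset.sum_le_card_nsmul _ _ _ (fun y _ => hper y)
    _ = ((2 * k * (2 * k - 1) ^ (K - 1)) * (M + 1)) * bnd := by
        rw [smul_eq_mul, Finset.card_univ]
        congr 1
        rw [Fintype.card_prod, Fintype.card_prod, Fintype.card_fin, card_A]
        have hcw : Fintype.card (Codes k (K - 1)) = (2 * k - 1) ^ (K - 1) := by
          rw [← Nat.card_eq_fintype_card, card_codes]
        rw [hcw]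

lemma one_sub_pow_le (x : ℝ) (h0 : 0 ≤ x) (h1 : x ≤ 1) (m : ℕ) :
    1 - x ^ m ≤ m * (1 - x) := by
  induction m with
  | zero => simp
  | succ m ih =>
    have hp : x ^ m ≤ 1 := pow_le_one₀ h0 h1
    have hp0 : 0 ≤ x ^ m := pow_nonneg h0 m
    push_cast
    rw [pow_succ]
    nlinarith [ih]

lemma n_mul_pow_le {q : ℝ} (h0 : 0 < q) (h1 : q < 1) (n : ℕ) :
    (n : ℝ) * q ^ n ≤ q / (1 - q) := by
  have hq1 : (0:ℝ) < 1 - q := by linarith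
  have hiq : (0:ℝ) < 1 / q := by positivity
  have hber := one_add_mul_le_pow (a := 1 / q - 1) (by linarith) n
  have hpow : (1 + (1 / q - 1)) ^ n = 1 / q ^ n := by
    rw [show 1 + (1 / q - 1) = 1 / q by ring, div_pow, one_pow]
  rw [hpow] at hber
  have hqn : (0:ℝ) < q ^ n := pow_pos h0 n
  rw [le_div_iff₀ hq1]
  have h2 : (n : ℝ) * (1 / q - 1) ≤ 1 / q ^ n := by linarith
  calc (n : ℝ) * q ^ n * (1 - q) = ((n : ℝ) * (1 / q - 1)) * q ^ n * q := by
        field_simp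
    _ ≤ (1 / q ^ n) * q ^ n * q :=
        mul_le_mul_of_nonneg_right (mul_le_mul_of_nonneg_right h2 hqn.le) h0.le
    _ = q := by field_simp

end S12

open S12 in
set_option maxHeartbeats 2000000 in
theorem statement12 (k m K : ℕ) (hk : 2 ≤ k) (hm : 1 ≤ m) (hK : 1 ≤ K)
    (lam : ℝ) (hlam0 : 0 < lam) (hlam1 : lam < 1) :
    ExpGenericIn {T : Fin m → FreeGroup (Fin k) | T ∈ Cset k m ∧
      ∀ i, ∀ s : List (Fin k × Bool), Subword s (T i).toWord →
        lam * ((T i).toWord.length : ℝ) ≤ (s.length : ℝ) →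
        ∀ w : FreeGroup (Fin k), w.toWord.length ≤ K → Subword w.toWord s} := by
  classical
  set U : Set (Fin m → FreeGroup (Fin k)) := {T | T ∈ Cset k m ∧
      ∀ i, ∀ s : List (Fin k × Bool), Subword s (T i).toWord →
        lam * ((T i).toWord.length : ℝ) ≤ (s.length : ℝ) →
        ∀ w : FreeGroup (Fin k), w.toWord.length ≤ K → Subword w.toWord s} with hUdef
  refine ⟨fun T hT => hT.1, ?_⟩
  -- gamma computations
  have hγU : ∀ n, gammaA U n = (Nat.card {g : FreeGroup (Fin k) //
      CyclicallyReduced g ∧ wlen g = n ∧ GoodP K lam g.toWord}) ^ m := by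
    intro n
    apply gamma_eq
    intro T
    constructor
    · rintro ⟨⟨⟨hcyc, _⟩, hgood⟩, hlen⟩
      exact fun i => ⟨hcyc i, hlen i, hgood i⟩
    · intro h
      exact ⟨⟨⟨fun i => (h i).1, fun i j => by rw [(h i).2.1, (h j).2.1]⟩,
        fun i => (h i).2.2⟩, fun i => (h i).2.1⟩
  have hγC : ∀ n, gammaA (Cset k m) n = (Nat.card {g : FreeGroup (Fin k) //
      CyclicallyReduced g ∧ wlen g = n}) ^ m := by
    intro n
    apply gamma_eq
    intro T
    constructor
    · rintro ⟨⟨hcyc, _⟩, hlen⟩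
      exact fun i => ⟨hcyc i, hlen i⟩
    · intro h
      exact ⟨⟨fun i => (h i).1, fun i j => by rw [(h i).2, (h j).2]⟩, fun i => (h i).2⟩
  haveI hfinCR : ∀ n, Finite {g : FreeGroup (Fin k) // CyclicallyReduced g ∧ wlen g = n} := by
    intro n
    haveI : Finite {l : List (A k) // l.length = n} :=
      inferInstanceAs (Finite (List.Vector (A k) n))
    apply Finite.of_injective
      (fun g : {g : FreeGroup (Fin k) // CyclicallyReduced g ∧ wlen g = n} =>
        (⟨g.1.toWord, g.2.2⟩ : {l : List (A k) // l.length = n}))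
    intro g₁ g₂ h
    simp only [Subtype.mk.injEq] at h
    exact Subtype.ext (FreeGroup.toWord_injective (congrArg Subtype.val h))
  have hmono : ∀ n, gammaA U n ≤ gammaA (Cset k m) n := by
    intro n
    haveI := hfinCR n
    have hfin : {T : Fin m → FreeGroup (Fin k) | T ∈ Cset k m ∧ ∀ i, wlen (T i) = n}.Finite := by
      rw [← Set.finite_coe_iff]
      have e : {T : Fin m → FreeGroup (Fin k) // T ∈ Cset k m ∧ ∀ i, wlen (T i) = n} ≃
          (Fin m → {g : FreeGroup (Fin k) // CyclicallyReduced g ∧ wlen g = n}) := by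
        refine (Equiv.subtypeEquivRight ?_).trans (piSubtypeEquiv m _)
        intro T
        constructor
        · rintro ⟨⟨hcyc, _⟩, hlen⟩
          exact fun i => ⟨hcyc i, hlen i⟩
        · intro h
          exact ⟨⟨fun i => (h i).1, fun i j => by rw [(h i).2, (h j).2]⟩, fun i => (h i).2⟩
      exact Finite.of_equiv _ e.symm
    refine Set.ncard_le_ncard ?_ hfin
    intro T hT
    exact ⟨hT.1.1, hT.2⟩
  have hratio01 : ∀ n, 0 ≤ (gammaA U n : ℝ) / (gammaA (Cset k m) n : ℝ) ∧
      (gammaA U n : ℝ) / (gammaA (Cset k m) n : ℝ) ≤ 1 := by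
    intro n
    refine ⟨by positivity, ?_⟩
    rcases Nat.eq_zero_or_pos (gammaA (Cset k m) n) with h | h
    · rw [h]; simp
    · rw [div_le_one (by exact_mod_cast h)]
      exact_mod_cast hmono n
  -- constants
  obtain ⟨d, hd3, hdk⟩ : ∃ d, 3 ≤ d ∧ 2 * k - 1 = d := ⟨2 * k - 1, by omega, rfl⟩
  set Dr : ℝ := (d : ℝ) with hDrdef
  have hDr3 : (3:ℝ) ≤ Dr := by rw [hDrdef]; exact_mod_cast hd3
  have hDKpos : (0:ℝ) < Dr ^ (K + 1) := pow_pos (by linarith) _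
  have hDK2 : (2:ℝ) ≤ Dr ^ (K + 1) :=
    le_trans (by linarith) (le_self_pow₀ (by linarith) (by omega))
  set θ : ℝ := (Dr ^ (K + 1) - 1) / Dr ^ (K + 1) with hθdef
  have hθ0 : 0 < θ := div_pos (by linarith) hDKpos
  have hθ1 : θ < 1 := by rw [hθdef, div_lt_one hDKpos]; linarith
  have hθmul : θ * Dr ^ (K + 1) = Dr ^ (K + 1) - 1 := by
    rw [hθdef]; field_simp
  set ee : ℝ := lam / ((K : ℝ) + 1) with hedef
  have he0 : 0 < ee := by rw [hedef]; positivity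
  set r : ℝ := θ ^ ee with hrdef
  have hr0 : 0 < r := Real.rpow_pos_of_pos hθ0 ee
  have hr1 : r < 1 := Real.rpow_lt_one hθ0.le hθ1 he0
  set q : ℝ := Real.sqrt r with hqdef
  have hq0 : 0 < q := Real.sqrt_pos.mpr hr0
  have hq1 : q < 1 := by
    rw [hqdef, show (1:ℝ) = Real.sqrt 1 by rw [Real.sqrt_one]]
    exact Real.sqrt_lt_sqrt hr0.le hr1
  have hqq : q * q = r := Real.mul_self_sqrt hr0.le
  set rc : ℝ := θ ^ (-(1 + (K : ℝ)) / ((K : ℝ) + 1)) with hrcdef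
  have hrc0 : 0 < rc := Real.rpow_pos_of_pos hθ0 _
  set CON : ℝ := (m : ℝ) * (2 * (k : ℝ)) * (Dr ^ (K - 1) * Dr) / (Dr - 1) with hCONdef
  have hCON0 : 0 ≤ CON := by
    rw [hCONdef]
    apply div_nonneg (by positivity) (by linarith)
  set C2 : ℝ := CON * rc * (q / (1 - q)) with hC2def
  have hC20 : 0 ≤ C2 := by
    rw [hC2def]
    apply mul_nonneg (mul_nonneg hCON0 hrc0.le)
    apply div_nonneg hq0.le (by linarith)
  refine ⟨max C2 (1 / q ^ 2), lt_of_lt_of_le (by positivity) (le_max_right _ _),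
    q, hq0, hq1, ?_⟩
  intro n
  rcases lt_or_ge n 2 with hn2 | hn2
  · -- small n
    obtain ⟨h0, h1⟩ := hratio01 n
    have habs : |(gammaA U n : ℝ) / (gammaA (Cset k m) n : ℝ) - 1| ≤ 1 := by
      rw [abs_le]
      constructor <;> linarith
    refine le_trans habs ?_
    have hq2 : q ^ 2 ≤ q ^ n := pow_le_pow_of_le_one hq0.le hq1.le (by omega)
    calc (1:ℝ) = (1 / q ^ 2) * q ^ 2 := by field_simp
      _ ≤ (1 / q ^ 2) * q ^ n := by
          apply mul_le_mul_of_nonneg_left hq2 (by positivity)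
      _ ≤ max C2 (1 / q ^ 2) * q ^ n := by
          apply mul_le_mul_of_nonneg_right (le_max_right _ _) (by positivity)
  · -- big n
    obtain ⟨M, rfl⟩ : ∃ M, n = M + 1 := ⟨n - 1, by omega⟩
    have hM1 : 1 ≤ M := by omega
    set L0 : ℕ := ⌈lam * ((M + 1 : ℕ) : ℝ)⌉₊ with hL0
    set B : ℕ := (L0 - 1) / (K + 1) with hB
    set G : ℕ := Nat.card {z : A k × Codes k M //
      CycLP (decode z.1 z.2.1) ∧ GoodP K lam (decode z.1 z.2.1)} with hG
    set Cc : ℕ := Nat.card {z : A k × Codes k M // CycLP (decode z.1 z.2.1)} with hCcdef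
    have hγU' : gammaA U (M + 1) = G ^ m := by
      rw [hγU (M + 1), hG]
      congr 1
      refine Nat.card_congr (((Equiv.subtypeEquivRight (fun g => Iff.rfl)).trans
        (fgEquiv (fun L => CycLP L ∧ L.length = M + 1 ∧ GoodP K lam L))).trans
        ((Equiv.subtypeEquivRight (fun L => by tauto)).trans
          (listCode hk M (fun L => CycLP L ∧ GoodP K lam L))))
    have hγC' : gammaA (Cset k m) (M + 1) = Cc ^ m := by
      rw [hγC (M + 1), hCcdef]
      congr 1
      refine Nat.card_congr (((Equiv.subtypeEquivRight (fun g => Iff.rfl)).trans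
        (fgEquiv (fun L => CycLP L ∧ L.length = M + 1))).trans
        ((Equiv.subtypeEquivRight (fun L => by tauto)).trans
          (listCode hk M (fun L => CycLP L))))
    -- nat counting facts
    have hpart := card_subtype_and_add (X := A k × Codes k M)
      (fun z => CycLP (decode z.1 z.2.1)) (fun z => GoodP K lam (decode z.1 z.2.1))
    have hdrop : Nat.card {z : A k × Codes k M // CycLP (decode z.1 z.2.1) ∧
        ¬ GoodP K lam (decode z.1 z.2.1)} ≤ Nat.card {z : A k × Codes k M //
        ¬ GoodP K lam (decode z.1 z.2.1)} := card_subtype_le_of_imp (fun z h => h.2)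
    have hBND := bad_count hk hK lam hlam0 M hL0 hB
    have hlow := cyc_lower k M hM1
    have hGle : G ≤ Cc := by
      rw [hG, hCcdef]; omega
    have hBadle : Cc - G ≤ ((2 * k * (2 * k - 1) ^ (K - 1)) * (M + 1)) *
        (2 * k * (((2 * k - 1) ^ (K + 1) - 1) ^ B * (2 * k - 1) ^ (M - B * (K + 1)))) := by
      rw [hG, hCcdef]; omega
    have hpowlt : (2 * k - 1) ^ (M - 1) < (2 * k - 1) ^ M :=
      Nat.pow_lt_pow_right (by omega) (by omega)
    have hCcpos : 0 < Cc :=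
      lt_of_lt_of_le (Nat.mul_pos (by omega) (by omega)) hlow
    -- real versions
    have hRC : (0:ℝ) < (Cc : ℝ) := by exact_mod_cast hCcpos
    set x : ℝ := (G : ℝ) / (Cc : ℝ) with hxdef
    have hx0 : 0 ≤ x := by rw [hxdef]; positivity
    have hx1 : x ≤ 1 := by
      rw [hxdef, div_le_one hRC]; exact_mod_cast hGle
    have hdiff : |(gammaA U (M + 1) : ℝ) / (gammaA (Cset k m) (M + 1) : ℝ) - 1|
        = 1 - x ^ m := by
      rw [hγU', hγC']
      push_cast
      rw [← div_pow, ← hxdef]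
      rw [abs_of_nonpos (by nlinarith [pow_le_one₀ hx0 hx1 (n := m),
        hx0, hx1, pow_nonneg hx0 m])]
      ring
    rw [hdiff]
    -- arithmetic facts about L0, B
    have hBle : B * (K + 1) ≤ L0 - 1 := by rw [hB]; exact Nat.div_mul_le_self _ _
    have hL0pos : 1 ≤ L0 := by
      rw [hL0]; exact Nat.ceil_pos.mpr (by positivity)
    have hL0n : L0 ≤ M + 1 := by
      rw [hL0]
      apply Nat.ceil_le.mpr
      calc lam * ((M + 1 : ℕ) : ℝ) ≤ 1 * ((M + 1 : ℕ) : ℝ) :=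
            mul_le_mul_of_nonneg_right hlam1.le (by positivity)
        _ = ((M + 1 : ℕ) : ℝ) := one_mul _
    have hBM : B * (K + 1) ≤ M := by omega
    have hBlow : L0 - 1 ≤ B * (K + 1) + K := by
      have h1 := Nat.div_add_mod (L0 - 1) (K + 1)
      have h2 := Nat.mod_lt (L0 - 1) (y := K + 1) (by omega)
      have hBmul : B * (K + 1) = (K + 1) * ((L0 - 1) / (K + 1)) := by
        rw [hB, Nat.mul_comm]
      omega
    have hlamL0 : lam * ((M + 1 : ℕ) : ℝ) ≤ (L0 : ℝ) := by
      rw [hL0]; exact Nat.le_ceil _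
    have hexp : (lam * ((M + 1 : ℕ) : ℝ) - (1 + (K : ℝ))) / ((K : ℝ) + 1) ≤ (B : ℝ) := by
      rw [div_le_iff₀ (by positivity)]
      have hcast : (L0 : ℝ) ≤ (B : ℝ) * ((K : ℝ) + 1) + (K : ℝ) + 1 := by
        exact_mod_cast (show L0 ≤ B * (K + 1) + K + 1 by omega)
      linarith
    have hθB : θ ^ B ≤ rc * r ^ (M + 1) := by
      calc θ ^ B = θ ^ ((B : ℕ) : ℝ) := (Real.rpow_natCast θ B).symm
        _ ≤ θ ^ ((lam * ((M + 1 : ℕ) : ℝ) - (1 + (K : ℝ))) / ((K : ℝ) + 1)) :=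
            Real.rpow_le_rpow_of_exponent_ge hθ0 hθ1.le hexp
        _ = rc * r ^ (M + 1) := by
            rw [show (lam * ((M + 1 : ℕ) : ℝ) - (1 + (K : ℝ))) / ((K : ℝ) + 1)
                = (-(1 + (K : ℝ)) / ((K : ℝ) + 1)) + ee * ((M + 1 : ℕ) : ℝ) by
              rw [hedef]; field_simp; ring]
            rw [Real.rpow_add hθ0]
            congr 1
            rw [Real.rpow_mul hθ0.le, ← hrdef, Real.rpow_natCast]
    -- casts
    have hcast0 : ((2 * k - 1 : ℕ) : ℝ) = Dr := by
      rw [hdk]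
    have hone : 1 ≤ (2 * k - 1 : ℕ) ^ (K + 1) := Nat.one_le_pow _ _ (by omega)
    have hkr : (2:ℝ) ≤ (k : ℝ) := by exact_mod_cast hk
    have hRBcast : ((((2 * k * (2 * k - 1) ^ (K - 1)) * (M + 1)) *
        (2 * k * (((2 * k - 1) ^ (K + 1) - 1) ^ B * (2 * k - 1) ^ (M - B * (K + 1)))) : ℕ) : ℝ)
        = (2 * (k : ℝ) * Dr ^ (K - 1) * ((M : ℝ) + 1)) *
          (2 * (k : ℝ) * (θ ^ B * (Dr ^ (M - 1) * Dr))) := by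
      have h2 : θ ^ B * Dr ^ ((K + 1) * B) = (Dr ^ (K + 1) - 1) ^ B := by
        rw [← hθmul, mul_pow, pow_mul]
      have h3 : Dr ^ (M - B * (K + 1)) * Dr ^ ((K + 1) * B) = Dr ^ (M - 1) * Dr := by
        rw [← pow_add, ← pow_succ]
        congr 1
        have hcomm : (K + 1) * B = B * (K + 1) := Nat.mul_comm _ _
        omega
      push_cast [Nat.cast_sub hone, hcast0]
      rw [← h2, ← h3]
      ring
    have hclcast : ((2 * k * ((2 * k - 1) ^ M - (2 * k - 1) ^ (M - 1)) : ℕ) : ℝ)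
        = 2 * (k : ℝ) * (Dr ^ (M - 1) * Dr - Dr ^ (M - 1)) := by
      push_cast [Nat.cast_sub hpowlt.le, hcast0]
      rw [show Dr ^ M = Dr ^ (M - 1) * Dr by rw [← pow_succ]; congr 1; omega]
    have hDrM : (0:ℝ) < Dr ^ (M - 1) := pow_pos (by linarith) _
    have hRclpos : (0:ℝ) < 2 * (k : ℝ) * (Dr ^ (M - 1) * Dr - Dr ^ (M - 1)) := by
      have h5 : Dr ^ (M - 1) * 1 < Dr ^ (M - 1) * Dr :=
        mul_lt_mul_of_pos_left (by linarith) hDrM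
      nlinarith
    have hRclle : 2 * (k : ℝ) * (Dr ^ (M - 1) * Dr - Dr ^ (M - 1)) ≤ (Cc : ℝ) := by
      rw [← hclcast]
      exact_mod_cast hlow
    have hBadr : (Cc : ℝ) - (G : ℝ) ≤ ((((2 * k * (2 * k - 1) ^ (K - 1)) * (M + 1)) *
        (2 * k * (((2 * k - 1) ^ (K + 1) - 1) ^ B * (2 * k - 1) ^ (M - B * (K + 1)))) : ℕ) : ℝ) := by
      rw [← Nat.cast_sub hGle]
      exact_mod_cast hBadle
    have hfrac : (m : ℝ) * (((2 * (k : ℝ) * Dr ^ (K - 1) * ((M : ℝ) + 1)) *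
          (2 * (k : ℝ) * (θ ^ B * (Dr ^ (M - 1) * Dr)))) /
          (2 * (k : ℝ) * (Dr ^ (M - 1) * Dr - Dr ^ (M - 1))))
        = CON * ((M : ℝ) + 1) * θ ^ B := by
      rw [hCONdef]
      have h6 : Dr - 1 ≠ 0 := by linarith
      have h7 : (2 : ℝ) * (k : ℝ) * (Dr ^ (M - 1) * Dr - Dr ^ (M - 1)) ≠ 0 :=
        ne_of_gt hRclpos
      field_simp
    calc 1 - x ^ m
        ≤ (m : ℝ) * (1 - x) := one_sub_pow_le x hx0 hx1 m
      _ = (m : ℝ) * (((Cc : ℝ) - (G : ℝ)) / (Cc : ℝ)) := by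
          rw [hxdef, sub_div, div_self (ne_of_gt hRC)]
      _ ≤ (m : ℝ) * (((((2 * k * (2 * k - 1) ^ (K - 1)) * (M + 1)) *
            (2 * k * (((2 * k - 1) ^ (K + 1) - 1) ^ B
              * (2 * k - 1) ^ (M - B * (K + 1)))) : ℕ) : ℝ) /
            (2 * (k : ℝ) * (Dr ^ (M - 1) * Dr - Dr ^ (M - 1)))) := by
          apply mul_le_mul_of_nonneg_left ?_ (by positivity)
          exact div_le_div₀ (by positivity) hBadr hRclpos hRclle
      _ = (m : ℝ) * (((2 * (k : ℝ) * Dr ^ (K - 1) * ((M : ℝ) + 1)) *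
            (2 * (k : ℝ) * (θ ^ B * (Dr ^ (M - 1) * Dr)))) /
            (2 * (k : ℝ) * (Dr ^ (M - 1) * Dr - Dr ^ (M - 1)))) := by
          rw [hRBcast]
      _ = CON * ((M : ℝ) + 1) * θ ^ B := hfrac
      _ ≤ CON * ((M : ℝ) + 1) * (rc * r ^ (M + 1)) := by
          apply mul_le_mul_of_nonneg_left hθB
          apply mul_nonneg hCON0 (by positivity)
      _ = (CON * rc) * (((M + 1 : ℕ) : ℝ) * r ^ (M + 1)) := by
          push_cast
          ring
      _ ≤ (CON * rc) * ((q / (1 - q)) * q ^ (M + 1)) := by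
          apply mul_le_mul_of_nonneg_left ?_ (mul_nonneg hCON0 hrc0.le)
          have hsplit : ((M + 1 : ℕ) : ℝ) * r ^ (M + 1)
              = (((M + 1 : ℕ) : ℝ) * q ^ (M + 1)) * q ^ (M + 1) := by
            rw [← hqq, mul_pow]
            ring
          rw [hsplit]
          exact mul_le_mul_of_nonneg_right (n_mul_pow_le hq0 hq1 (M + 1))
            (pow_nonneg hq0.le _)
      _ = C2 * q ^ (M + 1) := by rw [hC2def]; ring
      _ ≤ max C2 (1 / q ^ 2) * q ^ (M + 1) :=
          mul_le_mul_of_nonneg_right (le_max_left _ _) (by positivity)
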